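/- Let m be a positive integer, D the m×m cyclic-shift permutation matrix, B = Dᵗ, and U(r) the m×m matrix whose r-th row has all entries 1 and all other entries 0. Then det(D − I + U(r)) = (−1)^{m−1} m for every r with 1 ≤ r ≤ m. -/

import Mathlib

open Matrix Finset

private def Mlast (n : ℕ) : Matrix (Fin (n+1)) (Fin (n+1)) ℚ :=
  Matrix.of fun i j => (if j = i + 1 then 1 else 0) - (if j = i then 1 else 0)
    + (if i = Fin.last n then 1 else 0)

private def Smat (n : ℕ) : Matrix (Fin (n+1)) (Fin (n+1)) ℚ :=
  Matrix.of fun i k => if i = Fin.last n then 1 else if k = i then 1 else 0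

private def Tmat (n : ℕ) : Matrix (Fin (n+1)) (Fin (n+1)) ℚ :=
  Matrix.of fun k j => if k ≤ j then 1 else 0

private def Lmat (n : ℕ) : Matrix (Fin (n+1)) (Fin (n+1)) ℚ :=
  Matrix.of fun i j => if i = Fin.last n then ((j : ℕ) + 1 : ℚ) else if j = i then -1 else 0

private lemma det_Smat (n : ℕ) : (Smat n).det = 1 := by
  rw [Matrix.det_of_lowerTriangular]
  · simp [Smat]
  · intro i j hij
    have hij' : i < j := hij
    have hne : ¬ i = Fin.last n := fun h =>
      absurd (h ▸ hij') (by simpa using (Fin.le_last j).not_gt)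
    simp [Smat, hne, hij'.ne']

private lemma det_Tmat (n : ℕ) : (Tmat n).det = 1 := by
  rw [Matrix.det_of_upperTriangular]
  · simp [Tmat]
  · intro i j hij
    have hij' : j < i := hij
    simp [Tmat, not_le.mpr hij']

private lemma SM_apply (n : ℕ) (i j : Fin (n+1)) :
    (Smat n * Mlast n) i j = if i = Fin.last n then 1 else Mlast n i j := by
  rw [Matrix.mul_apply]
  by_cases hi : i = Fin.last n
  · rw [if_pos hi]
    have h0 : ∀ k, Smat n i k = 1 := fun k => by simp [Smat, hi]
    simp_rw [h0, one_mul, Mlast, Matrix.of_apply]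
    rw [Finset.sum_add_distrib, Finset.sum_sub_distrib]
    have h1 : ∀ k : Fin (n+1), (j = k + 1) ↔ (k = j - 1) := by
      intro k; rw [eq_sub_iff_add_eq, eq_comm]
    simp_rw [h1]
    simp [Finset.sum_ite_eq', Finset.sum_ite_eq]
  · rw [if_neg hi]
    have h0 : ∀ k, Smat n i k = if k = i then 1 else 0 := fun k => by simp [Smat, hi]
    simp [h0, ite_mul, Finset.sum_ite_eq']

private lemma SMT (n : ℕ) : Smat n * Mlast n * Tmat n = Lmat n := by
  ext i j
  rw [Matrix.mul_apply]
  simp_rw [SM_apply]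
  by_cases hi : i = Fin.last n
  · have h0 : ∀ k : Fin (n+1),
        (if i = Fin.last n then (1:ℚ) else Mlast n i k) = 1 := fun k => if_pos hi
    simp_rw [h0, one_mul, Tmat, Matrix.of_apply]
    rw [Finset.sum_boole]
    have hfil : Finset.filter (fun k => k ≤ j) Finset.univ = Finset.Iic j := by
      ext k; simp
    rw [hfil, Fin.card_Iic]
    simp [Lmat, hi]
  · have h0 : ∀ k : Fin (n+1),
        (if i = Fin.last n then (1:ℚ) else Mlast n i k) = Mlast n i k := fun k => if_neg hi
    simp_rw [h0, Mlast, Matrix.of_apply, if_neg hi, add_zero, Tmat, sub_mul, ite_mul,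
      one_mul, zero_mul]
    simp only [Matrix.of_apply]
    rw [Finset.sum_sub_distrib]
    have h2 : ∀ c : Fin (n+1), (∑ k, if k = c then (if k ≤ j then (1:ℚ) else 0) else 0)
        = if c ≤ j then (1:ℚ) else 0 := by
      intro c; simp [Finset.sum_ite_eq']
    rw [h2, h2]
    have hsucc : ((i + 1 : Fin (n+1)) : ℕ) = (i : ℕ) + 1 :=
      Fin.val_add_one_of_lt (Fin.lt_last_iff_ne_last.mpr hi)
    simp only [Lmat, Matrix.of_apply, if_neg hi]
    by_cases hji : j = i
    · subst hji
      have h3 : ¬ (j + 1 ≤ j) := by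
        rw [Fin.le_iff_val_le_val, hsucc]; omega
      simp [h3]
    · have hvne : (j : ℕ) ≠ (i : ℕ) := fun h => hji (Fin.ext h)
      simp only [Fin.le_iff_val_le_val, hsucc, if_neg hji]
      split_ifs <;> first | omega | norm_num

private lemma det_Lmat (n : ℕ) : (Lmat n).det = (-1)^n * (n+1) := by
  rw [Matrix.det_of_lowerTriangular]
  · rw [Fin.prod_univ_castSucc]
    have h1 : ∀ i : Fin n, Lmat n i.castSucc i.castSucc = -1 := fun i => by
      simp [Lmat, (Fin.castSucc_lt_last i).ne]
    simp only [h1, Finset.prod_const, Finset.card_univ, Fintype.card_fin]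
    simp [Lmat]
  · intro i j hij
    have hij' : i < j := hij
    have hne : ¬ i = Fin.last n := fun h =>
      absurd (h ▸ hij') (by simpa using (Fin.le_last j).not_gt)
    simp [Lmat, hne, hij'.ne']

theorem stmt_2 (m : ℕ) [NeZero m] (r : Fin m)
    (D : Matrix (Fin m) (Fin m) ℚ)
    (hD : D = Matrix.of fun i j => if j = i + 1 then 1 else 0)
    (U : Matrix (Fin m) (Fin m) ℚ)
    (hU : U = Matrix.of fun i _ => if i = r then 1 else 0) :
    (D - 1 + U).det = (-1) ^ (m - 1) * m := by
  subst hD hU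
  obtain ⟨n, rfl⟩ := Nat.exists_eq_succ_of_ne_zero (NeZero.ne m)
  have key : (Matrix.of fun i j => if j = i + 1 then (1:ℚ) else 0) - 1
      + (Matrix.of fun i _ => if i = r then (1:ℚ) else 0)
      = (Mlast n).submatrix (Equiv.subRight (r+1)) (Equiv.subRight (r+1)) := by
    ext i j
    simp only [Matrix.submatrix_apply, Equiv.subRight_apply, Mlast, Matrix.of_apply,
      Matrix.sub_apply, Matrix.add_apply, Matrix.one_apply]
    have e1 : (j - (r+1) = i - (r+1) + 1) ↔ (j = i + 1) := by
      rw [sub_add_eq_add_sub, sub_left_inj]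
    have e2 : (j - (r+1) = i - (r+1)) ↔ (j = i) := sub_left_inj
    have e3 : (i - (r+1) = Fin.last n) ↔ (i = r) := by
      have hlast : (Fin.last n : Fin (n+1)) = -1 :=
        eq_neg_of_add_eq_zero_left (Fin.last_add_one n)
      rw [hlast, sub_eq_iff_eq_add]
      constructor
      · rintro rfl; abel
      · rintro rfl; abel
    have e4 : (if i = j then (1:ℚ) else 0) = (if j = i then 1 else 0) := by
      simp [eq_comm]
    rw [e4]
    simp only [e1, e2, e3]
  rw [key, Matrix.det_submatrix_equiv_self]
  have hdet : (Lmat n).det = (Smat n).det * (Mlast n).det * (Tmat n).det := by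
    rw [← Matrix.det_mul, ← Matrix.det_mul, SMT]
  rw [det_Smat, det_Tmat, one_mul, mul_one] at hdet
  rw [← hdet, det_Lmat]
  push_cast
  ring_nf
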